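/- For 0 < r < 1 define B(r) := −4r ∫₀^∞ [ (1 + log(1−r²) − log(1 + r² + 2r·cosh u)) / ((1 + r e^u)² (1 + r e^{−u})²) ] · ( r + ((1+r²)/2)·cosh u ) du. Then lim_{r→0⁺} B(r) = 0. -/

import Mathlib

open MeasureTheory Filter

/-- The integral representation `B(r)` of the coefficient function in the elliptic
expansion of the derivative of the automorphic Green's function. -/
noncomputable def Bfun (r : ℝ) : ℝ :=
  -4 * r * ∫ u in Set.Ioi (0 : ℝ),
    ((1 + Real.log (1 - r ^ 2) - Real.log (1 + r ^ 2 + 2 * r * Real.cosh u)) /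
        ((1 + r * Real.exp u) ^ 2 * (1 + r * Real.exp (-u)) ^ 2)) *
      (r + ((1 + r ^ 2) / 2) * Real.cosh u)

/-- The explicit antiderivative of `4 r ·` the integrand of `Bfun`. -/
noncomputable def Ffun (r u : ℝ) : ℝ :=
  (Real.log (1 + r * Real.exp u) + Real.log (1 + r * Real.exp (-u)) - Real.log (1 - r ^ 2)) *
      ((1 + r * Real.exp u)⁻¹ + r * Real.exp (-u) / (1 + r * Real.exp (-u)))
    + (1 - (1 + r ^ 2) / (1 - r ^ 2)) * (u + Real.log r)
    + ((1 + r ^ 2) / (1 - r ^ 2) - 1) * Real.log (1 + r * Real.exp u)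
    - ((1 + r ^ 2) / (1 - r ^ 2) + 1) * Real.log (1 + r * Real.exp (-u))

lemma BprodEq (r u : ℝ) :
    (1 + r * Real.exp u) * (1 + r * Real.exp (-u)) = 1 + r ^ 2 + 2 * r * Real.cosh u := by
  have h := Real.exp_ne_zero u
  rw [Real.cosh_eq, Real.exp_neg]
  field_simp
  ring

lemma Ffun_hasDeriv {r : ℝ} (hr : 0 < r) (hr1 : r < 1) (u : ℝ) :
    HasDerivAt (Ffun r)
      (4 * r * (((1 + Real.log (1 - r ^ 2) - Real.log (1 + r ^ 2 + 2 * r * Real.cosh u)) /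
          ((1 + r * Real.exp u) ^ 2 * (1 + r * Real.exp (-u)) ^ 2)) *
        (r + ((1 + r ^ 2) / 2) * Real.cosh u))) u := by
  have hEpos := Real.exp_pos u
  have hE'pos := Real.exp_pos (-u)
  have p1 : (0:ℝ) < 1 + r * Real.exp u := by positivity
  have p2 : (0:ℝ) < 1 + r * Real.exp (-u) := by positivity
  have hE : HasDerivAt Real.exp (Real.exp u) u := Real.hasDerivAt_exp u
  have hE2 : HasDerivAt (fun u : ℝ => Real.exp (-u)) (-Real.exp (-u)) u := by
    simpa using (hasDerivAt_neg u).exp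
  have h1 : HasDerivAt (fun u : ℝ => 1 + r * Real.exp u) (r * Real.exp u) u :=
    (hE.const_mul r).const_add 1
  have h2 : HasDerivAt (fun u : ℝ => 1 + r * Real.exp (-u)) (r * -Real.exp (-u)) u :=
    (hE2.const_mul r).const_add 1
  have ha : HasDerivAt (fun u : ℝ => Real.log (1 + r * Real.exp u))
      (r * Real.exp u / (1 + r * Real.exp u)) u := h1.log p1.ne'
  have hb : HasDerivAt (fun u : ℝ => Real.log (1 + r * Real.exp (-u)))
      (r * -Real.exp (-u) / (1 + r * Real.exp (-u))) u := h2.log p2.ne'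
  have hinv : HasDerivAt (fun u : ℝ => (1 + r * Real.exp u)⁻¹)
      (-(r * Real.exp u) / (1 + r * Real.exp u) ^ 2) u := h1.inv p1.ne'
  have hq : HasDerivAt (fun u : ℝ => r * Real.exp (-u) / (1 + r * Real.exp (-u)))
      ((r * -Real.exp (-u) * (1 + r * Real.exp (-u)) -
        r * Real.exp (-u) * (r * -Real.exp (-u))) / (1 + r * Real.exp (-u)) ^ 2) u :=
    (hE2.const_mul r).div h2 p2.ne'
  have hP := hinv.add hq
  have hΛ := (ha.add hb).sub_const (Real.log (1 - r ^ 2))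
  have hT1 := hΛ.mul hP
  have hT2 : HasDerivAt (fun u : ℝ => (1 - (1 + r ^ 2) / (1 - r ^ 2)) * (u + Real.log r))
      (1 - (1 + r ^ 2) / (1 - r ^ 2)) u := by
    simpa using ((hasDerivAt_id u).add_const (Real.log r)).const_mul (1 - (1 + r ^ 2) / (1 - r ^ 2))
  have hT3 := ha.const_mul ((1 + r ^ 2) / (1 - r ^ 2) - 1)
  have hT4 := hb.const_mul ((1 + r ^ 2) / (1 - r ^ 2) + 1)
  have hF := ((hT1.add hT2).add hT3).sub hT4
  refine hF.congr_deriv ?_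
  simp only [Pi.add_apply, Pi.mul_apply]
  have hlog : Real.log (1 + r ^ 2 + 2 * r * Real.cosh u)
      = Real.log (1 + r * Real.exp u) + Real.log (1 + r * Real.exp (-u)) := by
    rw [← BprodEq, Real.log_mul p1.ne' p2.ne']
  rw [hlog, Real.cosh_eq, Real.exp_neg]
  have hr2 : (1:ℝ) - r ^ 2 ≠ 0 := by nlinarith
  have hEne := Real.exp_ne_zero u
  have hp1 : (1 + r * Real.exp u) ≠ 0 := p1.ne'
  have hp2 : (1 + r * (Real.exp u)⁻¹) ≠ 0 := by
    rw [← Real.exp_neg]; exact p2.ne'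
  field_simp
  ring

set_option maxHeartbeats 1000000 in
lemma integrand_integrable {r : ℝ} (hr : 0 < r) (hr1 : r < 1) :
    IntegrableOn (fun u : ℝ =>
      4 * r * (((1 + Real.log (1 - r ^ 2) - Real.log (1 + r ^ 2 + 2 * r * Real.cosh u)) /
          ((1 + r * Real.exp u) ^ 2 * (1 + r * Real.exp (-u)) ^ 2)) *
        (r + ((1 + r ^ 2) / 2) * Real.cosh u))) (Set.Ioi (0:ℝ)) := by
  have hr2 : (0:ℝ) < 1 - r ^ 2 := by nlinarith
  obtain ⟨C₁, hC₁def⟩ : ∃ C₁ : ℝ, C₁ = 1 - Real.log (1 - r ^ 2) + 2 * Real.log 2 := ⟨_, rfl⟩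
  have hlog2 : (0:ℝ) ≤ Real.log 2 := Real.log_nonneg (by norm_num)
  have hlogr2 : Real.log (1 - r ^ 2) ≤ 0 := Real.log_nonpos (by linarith) (by nlinarith)
  have hC₁ : 0 ≤ C₁ := by rw [hC₁def]; linarith
  -- the dominating function
  have hg : IntegrableOn
      (fun u : ℝ => 4 * r * (2 * (C₁ + 2) / r ^ 2 * Real.exp (-(1/2) * u))) (Set.Ioi (0:ℝ)) :=
    (((exp_neg_integrableOn_Ioi 0 (by norm_num : (0:ℝ) < 1/2)).const_mul
      (2 * (C₁ + 2) / r ^ 2)).const_mul (4 * r))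
  refine Integrable.mono' hg ?_ ?_
  · -- measurability via continuity
    have hApos : ∀ u : ℝ, (0:ℝ) < 1 + r ^ 2 + 2 * r * Real.cosh u := fun u => by
      nlinarith [Real.cosh_pos u]
    have hA : Continuous fun u : ℝ => 1 + r ^ 2 + 2 * r * Real.cosh u := by continuity
    have hlogA := hA.log fun u => (hApos u).ne'
    have hnum : Continuous fun u : ℝ =>
        1 + Real.log (1 - r ^ 2) - Real.log (1 + r ^ 2 + 2 * r * Real.cosh u) :=
      continuous_const.sub hlogA
    have hdenc : Continuous fun u : ℝ =>
        (1 + r * Real.exp u) ^ 2 * (1 + r * Real.exp (-u)) ^ 2 := by continuity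
    have hfrac := hnum.div hdenc fun u => by
      have e1 := Real.exp_pos u
      have e2 := Real.exp_pos (-u)
      positivity
    have hfacc : Continuous fun u : ℝ => r + ((1 + r ^ 2) / 2) * Real.cosh u := by continuity
    exact (continuous_const.mul (hfrac.mul hfacc)).aestronglyMeasurable
  · rw [ae_restrict_iff' measurableSet_Ioi]
    refine ae_of_all _ fun u hu => ?_
    have hu0 : (0:ℝ) < u := hu
    have hEpos := Real.exp_pos u
    have hE'pos := Real.exp_pos (-u)
    have hE1 : (1:ℝ) ≤ Real.exp u := Real.one_le_exp hu0.le
    have hE'1 : Real.exp (-u) ≤ 1 := Real.exp_le_one_iff.mpr (by linarith)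
    have hcosh_pos := Real.cosh_pos u
    have hcosh_le : Real.cosh u ≤ Real.exp u := by
      rw [Real.cosh_eq]; linarith
    have p1 : (0:ℝ) < 1 + r * Real.exp u := by positivity
    have p2 : (0:ℝ) < 1 + r * Real.exp (-u) := by positivity
    have hden_pos : (0:ℝ) < (1 + r * Real.exp u) ^ 2 * (1 + r * Real.exp (-u)) ^ 2 := by
      positivity
    have hfac_pos : (0:ℝ) < r + ((1 + r ^ 2) / 2) * Real.cosh u := by positivity
    -- numerator bound
    have hA1 : (1:ℝ) ≤ 1 + r ^ 2 + 2 * r * Real.cosh u := by nlinarith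
    have hlogA_nonneg : 0 ≤ Real.log (1 + r ^ 2 + 2 * r * Real.cosh u) := Real.log_nonneg hA1
    have hlog4 : Real.log 4 = 2 * Real.log 2 := by
      rw [show (4:ℝ) = 2 ^ 2 by norm_num, Real.log_pow]; push_cast; ring
    have hlogA_le : Real.log (1 + r ^ 2 + 2 * r * Real.cosh u) ≤ u + 2 * Real.log 2 := by
      have h4 : 1 + r ^ 2 + 2 * r * Real.cosh u ≤ 4 * Real.exp u := by nlinarith
      calc Real.log (1 + r ^ 2 + 2 * r * Real.cosh u) ≤ Real.log (4 * Real.exp u) :=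
            Real.log_le_log (by linarith) h4
        _ = u + 2 * Real.log 2 := by
            rw [Real.log_mul (by norm_num) (Real.exp_ne_zero u), Real.log_exp, hlog4]; ring
    have hnum : |1 + Real.log (1 - r ^ 2) - Real.log (1 + r ^ 2 + 2 * r * Real.cosh u)|
        ≤ C₁ + u := by
      rw [abs_le, hC₁def]
      constructor <;> [linarith; linarith]
    -- denominator bound
    have hden_ge : r ^ 2 * Real.exp u ^ 2
        ≤ (1 + r * Real.exp u) ^ 2 * (1 + r * Real.exp (-u)) ^ 2 := by
      have t1 : (r * Real.exp u) ^ 2 ≤ (1 + r * Real.exp u) ^ 2 :=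
        pow_le_pow_left₀ (by positivity) (by linarith) 2
      have t2 : (1:ℝ) ≤ (1 + r * Real.exp (-u)) ^ 2 := by
        have h1' : (1:ℝ) ≤ 1 + r * Real.exp (-u) := le_add_of_nonneg_right (by positivity)
        calc (1:ℝ) = 1 ^ 2 := by norm_num
          _ ≤ (1 + r * Real.exp (-u)) ^ 2 := pow_le_pow_left₀ zero_le_one h1' 2
      calc r ^ 2 * Real.exp u ^ 2 = (r * Real.exp u) ^ 2 * 1 := by ring
        _ ≤ (1 + r * Real.exp u) ^ 2 * (1 + r * Real.exp (-u)) ^ 2 :=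
            mul_le_mul t1 t2 (by norm_num) (by positivity)
    -- factor bound
    have hfac_le : r + ((1 + r ^ 2) / 2) * Real.cosh u ≤ 2 * Real.exp u := by
      have hb1 : ((1 + r ^ 2) / 2) * Real.cosh u ≤ 1 * Real.cosh u :=
        mul_le_mul_of_nonneg_right (by nlinarith) hcosh_pos.le
      linarith
    -- assemble
    have hXY : |(1 + Real.log (1 - r ^ 2) - Real.log (1 + r ^ 2 + 2 * r * Real.cosh u)) /
          ((1 + r * Real.exp u) ^ 2 * (1 + r * Real.exp (-u)) ^ 2) *
        (r + ((1 + r ^ 2) / 2) * Real.cosh u)|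
        = |1 + Real.log (1 - r ^ 2) - Real.log (1 + r ^ 2 + 2 * r * Real.cosh u)| /
          ((1 + r * Real.exp u) ^ 2 * (1 + r * Real.exp (-u)) ^ 2) *
        (r + ((1 + r ^ 2) / 2) * Real.cosh u) := by
      rw [abs_mul, abs_div, abs_of_pos hden_pos, abs_of_pos hfac_pos]
    rw [Real.norm_eq_abs, abs_mul, hXY, abs_of_nonneg (by positivity : (0:ℝ) ≤ 4 * r)]
    have h2 : |1 + Real.log (1 - r ^ 2) - Real.log (1 + r ^ 2 + 2 * r * Real.cosh u)| /
          ((1 + r * Real.exp u) ^ 2 * (1 + r * Real.exp (-u)) ^ 2) *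
        (r + ((1 + r ^ 2) / 2) * Real.cosh u)
        ≤ (C₁ + u) / (r ^ 2 * Real.exp u ^ 2) * (2 * Real.exp u) := by
      gcongr
    have hup : C₁ + u ≤ (C₁ + 2) * Real.exp ((1/2) * u) := by
      have e1 : (1:ℝ) ≤ Real.exp ((1/2) * u) := Real.one_le_exp (by linarith)
      have e2 : (1/2) * u + 1 ≤ Real.exp ((1/2) * u) := Real.add_one_le_exp _
      nlinarith [mul_nonneg hC₁ (sub_nonneg.2 e1)]
    have h3 : (C₁ + u) / (r ^ 2 * Real.exp u ^ 2) * (2 * Real.exp u)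
        ≤ 2 * (C₁ + 2) / r ^ 2 * Real.exp (-(1/2) * u) := by
      have hX : Real.exp u = Real.exp ((1/2) * u) * Real.exp ((1/2) * u) := by
        rw [← Real.exp_add]; ring_nf
      have hXneg : Real.exp (-(1/2) * u) = (Real.exp ((1/2) * u))⁻¹ := by
        rw [← Real.exp_neg]; ring_nf
      have hXpos := Real.exp_pos ((1/2) * u)
      calc (C₁ + u) / (r ^ 2 * Real.exp u ^ 2) * (2 * Real.exp u)
          ≤ ((C₁ + 2) * Real.exp ((1/2) * u)) / (r ^ 2 * Real.exp u ^ 2) * (2 * Real.exp u) := by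
            gcongr
        _ = 2 * (C₁ + 2) / r ^ 2 * Real.exp (-(1/2) * u) := by
            rw [hX, hXneg]
            field_simp
    exact mul_le_mul_of_nonneg_left (h2.trans h3) (by positivity : (0:ℝ) ≤ 4 * r)

lemma Ffun_tendsto {r : ℝ} (hr : 0 < r) (hr1 : r < 1) :
    Tendsto (Ffun r) atTop (nhds 0) := by
  have hr2 : (0:ℝ) < 1 - r ^ 2 := by nlinarith
  have hid : ∀ u : ℝ, Real.log (1 + r * Real.exp u)
      = u + Real.log r + Real.log (1 + Real.exp (-u) / r) := by
    intro u
    have hEne := Real.exp_ne_zero u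
    have h1 : (1:ℝ) + r * Real.exp u = (r * Real.exp u) * (1 + Real.exp (-u) / r) := by
      rw [Real.exp_neg]; field_simp; ring
    have hpos2 : (0:ℝ) < 1 + Real.exp (-u) / r := by positivity
    rw [h1, Real.log_mul (by positivity) hpos2.ne',
      Real.log_mul hr.ne' hEne, Real.log_exp]
    ring
  have l1 : Tendsto (fun u : ℝ => Real.exp (-u)) atTop (nhds 0) :=
    Real.tendsto_exp_neg_atTop_nhds_zero
  have l2 : Tendsto (fun u : ℝ => 1 + r * Real.exp (-u)) atTop (nhds 1) := by
    simpa using ((l1.const_mul r).const_add 1)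
  have lb : Tendsto (fun u : ℝ => Real.log (1 + r * Real.exp (-u))) atTop (nhds 0) := by
    have := (Real.continuousAt_log one_ne_zero).tendsto.comp l2
    simpa [Function.comp_def] using this
  have l2' : Tendsto (fun u : ℝ => 1 + Real.exp (-u) / r) atTop (nhds 1) := by
    simpa using ((l1.div_const r).const_add 1)
  have lc : Tendsto (fun u : ℝ => Real.log (1 + Real.exp (-u) / r)) atTop (nhds 0) := by
    have := (Real.continuousAt_log one_ne_zero).tendsto.comp l2'
    simpa [Function.comp_def] using this
  have ldenTop : Tendsto (fun u : ℝ => 1 + r * Real.exp u) atTop atTop :=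
    tendsto_atTop_add_const_left _ 1 (Real.tendsto_exp_atTop.const_mul_atTop hr)
  have linv : Tendsto (fun u : ℝ => (1 + r * Real.exp u)⁻¹) atTop (nhds 0) :=
    ldenTop.inv_tendsto_atTop
  have lq : Tendsto (fun u : ℝ => r * Real.exp (-u) / (1 + r * Real.exp (-u))) atTop (nhds 0) := by
    simpa [Pi.div_def] using (l1.const_mul r).div l2 one_ne_zero
  have lue : Tendsto (fun u : ℝ => u * Real.exp (-u)) atTop (nhds 0) := by
    simpa using Real.tendsto_pow_mul_exp_neg_atTop_nhds_zero 1
  have lup : Tendsto (fun u : ℝ => u * (1 + r * Real.exp u)⁻¹) atTop (nhds 0) := by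
    have lbound : Tendsto (fun u : ℝ => 1 / r * (u * Real.exp (-u))) atTop (nhds 0) := by
      simpa using lue.const_mul (1 / r)
    refine tendsto_of_tendsto_of_tendsto_of_le_of_le' tendsto_const_nhds lbound ?_ ?_
    · filter_upwards [eventually_ge_atTop (0:ℝ)] with u hu
      have p1 : (0:ℝ) < 1 + r * Real.exp u := by positivity
      exact mul_nonneg hu (le_of_lt (inv_pos.2 p1))
    · filter_upwards [eventually_ge_atTop (0:ℝ)] with u hu
      have hEpos := Real.exp_pos u
      calc u * (1 + r * Real.exp u)⁻¹ ≤ u * (r * Real.exp u)⁻¹ :=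
            mul_le_mul_of_nonneg_left
              (inv_anti₀ (by positivity) (by linarith)) hu
        _ = 1 / r * (u * Real.exp (-u)) := by rw [Real.exp_neg]; ring
  have luq : Tendsto (fun u : ℝ =>
      u * (r * Real.exp (-u) / (1 + r * Real.exp (-u)))) atTop (nhds 0) := by
    have h := lue.mul (tendsto_const_nhds.div l2 one_ne_zero :
      Tendsto (fun u : ℝ => r / (1 + r * Real.exp (-u))) atTop (nhds (r / 1)))
    have h' := h.congr (fun u => by ring :
      ∀ u : ℝ, u * Real.exp (-u) * (r / (1 + r * Real.exp (-u)))
        = u * (r * Real.exp (-u) / (1 + r * Real.exp (-u))))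
    simpa using h'
  -- the regrouped limit
  have main : Tendsto (fun u : ℝ =>
      (u * (1 + r * Real.exp u)⁻¹ + u * (r * Real.exp (-u) / (1 + r * Real.exp (-u))))
      + (Real.log r + (Real.log (1 + Real.exp (-u) / r) + Real.log (1 + r * Real.exp (-u))
          - Real.log (1 - r ^ 2)))
        * ((1 + r * Real.exp u)⁻¹ + r * Real.exp (-u) / (1 + r * Real.exp (-u)))
      + ((1 + r ^ 2) / (1 - r ^ 2) - 1) * Real.log (1 + Real.exp (-u) / r)
      - ((1 + r ^ 2) / (1 - r ^ 2) + 1) * Real.log (1 + r * Real.exp (-u)))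
      atTop (nhds 0) := by
    have m1 := lup.add luq
    have m2 : Tendsto (fun u : ℝ =>
        Real.log r + (Real.log (1 + Real.exp (-u) / r) + Real.log (1 + r * Real.exp (-u))
          - Real.log (1 - r ^ 2))) atTop
        (nhds (Real.log r + (0 + 0 - Real.log (1 - r ^ 2)))) :=
      tendsto_const_nhds.add ((lc.add lb).sub tendsto_const_nhds)
    have m3 := m2.mul (linv.add lq)
    have m4 := lc.const_mul ((1 + r ^ 2) / (1 - r ^ 2) - 1)
    have m5 := lb.const_mul ((1 + r ^ 2) / (1 - r ^ 2) + 1)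
    have := ((m1.add (by simpa using m3)).add (by simpa using m4)).sub (by simpa using m5)
    simpa using this
  refine main.congr fun u => ?_
  simp only [Ffun]
  rw [hid u]
  ring

lemma Ffun_zero {r : ℝ} (hr : 0 < r) (hr1 : r < 1) :
    Ffun r 0 = -Real.log (1 - r ^ 2) - 2 * r ^ 2 * Real.log r / (1 - r ^ 2) := by
  have h1 : (1:ℝ) + r ≠ 0 := by linarith
  have h2 : (1:ℝ) - r ^ 2 ≠ 0 := by nlinarith
  simp only [Ffun, neg_zero, Real.exp_zero, mul_one]
  field_simp
  ring

lemma Bfun_eq {r : ℝ} (hr : 0 < r) (hr1 : r < 1) :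
    Bfun r = -Real.log (1 - r ^ 2) - 2 * r ^ 2 * Real.log r / (1 - r ^ 2) := by
  have hint := integrand_integrable hr hr1
  have key := integral_Ioi_of_hasDerivAt_of_tendsto (a := (0:ℝ)) (m := 0)
    ((Ffun_hasDeriv hr hr1 0).continuousAt.continuousWithinAt)
    (fun x _ => Ffun_hasDeriv hr hr1 x) hint (Ffun_tendsto hr hr1)
  rw [MeasureTheory.integral_const_mul] at key
  rw [← Ffun_zero hr hr1]
  simp only [Bfun]
  nlinarith [key]

/-- `lim_{r→0⁺} B(r) = 0`. -/
theorem B_tendsto_zero :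
    Tendsto Bfun (nhdsWithin 0 (Set.Ioi 0)) (nhds 0) := by
  have hg : Tendsto (fun r : ℝ => -Real.log (1 - r ^ 2) - 2 * r ^ 2 * Real.log r / (1 - r ^ 2))
      (nhdsWithin 0 (Set.Ioi 0)) (nhds 0) := by
    have h1 : Tendsto (fun r : ℝ => -Real.log (1 - r ^ 2)) (nhdsWithin 0 (Set.Ioi 0)) (nhds 0) := by
      have hcont1 : Continuous fun r : ℝ => (1:ℝ) - r ^ 2 := by continuity
      have ht : Tendsto (fun r : ℝ => (1:ℝ) - r ^ 2) (nhds 0) (nhds 1) := by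
        have := hcont1.tendsto (0:ℝ)
        simpa using this
      have hlog := (Real.continuousAt_log one_ne_zero).tendsto.comp ht
      have h1' : Tendsto (fun r : ℝ => -Real.log (1 - r ^ 2)) (nhdsWithin 0 (Set.Ioi 0))
          (nhds (-Real.log 1)) := hlog.neg.mono_left nhdsWithin_le_nhds
      simpa using h1'
    have hxlogx : Tendsto (fun x : ℝ => Real.log x * x) (nhdsWithin 0 (Set.Ioi 0)) (nhds 0) := by
      simpa using tendsto_log_mul_rpow_nhdsGT_zero (r := 1) zero_lt_one
    have hidlim : Tendsto (fun r : ℝ => r) (nhdsWithin 0 (Set.Ioi 0)) (nhds 0) :=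
      (continuous_id.tendsto 0).mono_left nhdsWithin_le_nhds
    have hnum : Tendsto (fun r : ℝ => 2 * (r * (Real.log r * r)))
        (nhdsWithin 0 (Set.Ioi 0)) (nhds 0) := by
      simpa using (hidlim.mul hxlogx).const_mul 2
    have hden : Tendsto (fun r : ℝ => (1:ℝ) - r ^ 2) (nhdsWithin 0 (Set.Ioi 0)) (nhds 1) := by
      have hc : ContinuousAt (fun r : ℝ => (1:ℝ) - r ^ 2) 0 := by fun_prop
      have h1' : Tendsto (fun r : ℝ => (1:ℝ) - r ^ 2) (nhdsWithin 0 (Set.Ioi 0))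
          (nhds (1 - 0 ^ 2)) := hc.tendsto.mono_left nhdsWithin_le_nhds
      simpa using h1'
    have h2 : Tendsto (fun r : ℝ => 2 * r ^ 2 * Real.log r / (1 - r ^ 2))
        (nhdsWithin 0 (Set.Ioi 0)) (nhds 0) := by
      have := hnum.div hden one_ne_zero
      have h' := this.congr (fun r => by ring :
        ∀ r : ℝ, 2 * (r * (Real.log r * r)) / (1 - r ^ 2)
          = 2 * r ^ 2 * Real.log r / (1 - r ^ 2))
      simpa using h'
    simpa using h1.sub h2
  have hev : ∀ᶠ r in nhdsWithin (0:ℝ) (Set.Ioi 0),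
      (fun r : ℝ => -Real.log (1 - r ^ 2) - 2 * r ^ 2 * Real.log r / (1 - r ^ 2)) r = Bfun r := by
    filter_upwards [Ioo_mem_nhdsGT_of_mem
      (by constructor <;> norm_num : (0:ℝ) ∈ Set.Ico 0 1)] with r hrm
    exact (Bfun_eq hrm.1 hrm.2).symm
  exact hg.congr' hev
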